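/- arXiv:1510.07938 — 4 statements merged into one kernel-verified Lean document; each statement's English description precedes it below -/
import Mathlib

section
/- Let 𝔤 be a perfect Lie algebra over a field k, D a derivation of 𝔤, and 𝔥 = 𝔤 ⋊_D k. If ω and ω' are 2-cocycles on 𝔥 that agree on 𝔤 × 𝔤 (i.e., ω((ξ,0),(η,0)) = ω'((ξ,0),(η,0)) for all ξ,η ∈ 𝔤), then ω = ω'. -/
/-- For a perfect Lie algebra `𝔤` and derivation `D`, two 2-cocycles on `𝔤 ⋊_D k`
that agree on `𝔤 × 𝔤` are equal. -/
theorem stmt1 {k g : Type*} [Field k] [LieRing g] [LieAlgebra k g]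
    (D : g →ₗ[k] g) (hD : ∀ x y : g, D ⁅x, y⁆ = ⁅D x, y⁆ + ⁅x, D y⁆)
    (hperf : ∀ x : g, x ∈ Submodule.span k {z : g | ∃ a b : g, z = ⁅a, b⁆})
    (br : g × k → g × k → g × k)
    (hbr : ∀ u v : g × k, br u v = (⁅u.1, v.1⁆ + u.2 • D v.1 - v.2 • D u.1, 0))
    (ω ω' : g × k →ₗ[k] g × k →ₗ[k] k)
    (halt : ∀ u : g × k, ω u u = 0)
    (hcoc : ∀ u v w : g × k, ω (br u v) w + ω (br v w) u + ω (br w u) v = 0)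
    (halt' : ∀ u : g × k, ω' u u = 0)
    (hcoc' : ∀ u v w : g × k, ω' (br u v) w + ω' (br v w) u + ω' (br w u) v = 0)
    (hagree : ∀ ξ η : g, ω (ξ, 0) (η, 0) = ω' (ξ, 0) (η, 0)) :
    ω = ω' := by
  -- antisymmetry of alternating bilinear forms
  have antis : ∀ (φ : g × k →ₗ[k] g × k →ₗ[k] k), (∀ u, φ u u = 0) →
      ∀ u v, φ u v = -φ v u := by
    intro φ h u v
    have h2 := h (u + v)
    simp only [map_add, LinearMap.add_apply, h u, h v] at h2
    linear_combination h2
  -- key: ω and ω' agree on ((ξ,0),(0,1))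
  set L : g →ₗ[k] k :=
    (((ω - ω').flip ((0:g), (1:k)))).comp (LinearMap.inl k g k) with hLdef
  have hLval : ∀ ξ : g, L ξ = ω (ξ, (0:k)) ((0:g), (1:k)) - ω' (ξ, (0:k)) ((0:g), (1:k)) := by
    intro ξ
    simp [hLdef]
  have hspan : Submodule.span k {z : g | ∃ a b : g, z = ⁅a, b⁆} ≤ LinearMap.ker L := by
    rw [Submodule.span_le]
    rintro z ⟨a, b, rfl⟩
    rw [SetLike.mem_coe, LinearMap.mem_ker, hLval, sub_eq_zero]
    have h1 := hcoc (a, 0) (b, 0) ((0:g), (1:k))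
    have h2 := hcoc' (a, 0) (b, 0) ((0:g), (1:k))
    rw [hbr, hbr, hbr] at h1 h2
    simp only [lie_zero, zero_lie, map_zero, smul_zero, zero_smul, one_smul,
      zero_sub, sub_zero, add_zero, zero_add] at h1 h2
    have hn : ((-(D b) : g), (0:k)) = -(((D b) : g), (0:k)) := by
      simp [Prod.ext_iff]
    rw [hn, map_neg] at h1 h2
    simp only [LinearMap.neg_apply] at h1 h2
    rw [hagree (D b) a, hagree (D a) b] at h1
    linear_combination h1 - h2
  have key : ∀ ξ : g, ω (ξ, (0:k)) ((0:g), (1:k)) = ω' (ξ, (0:k)) ((0:g), (1:k)) := by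
    intro ξ
    have := hspan (hperf ξ)
    rw [LinearMap.mem_ker, hLval, sub_eq_zero] at this
    exact this
  -- now the general statement
  apply LinearMap.ext; intro u; apply LinearMap.ext; intro v
  obtain ⟨x, s⟩ := u
  obtain ⟨y, t⟩ := v
  have hu : ((x, s) : g × k) = (x, (0:k)) + s • ((0:g), (1:k)) := by
    simp [Prod.ext_iff]
  have hv : ((y, t) : g × k) = (y, (0:k)) + t • ((0:g), (1:k)) := by
    simp [Prod.ext_iff]
  rw [hu, hv]
  simp only [map_add, map_smul, LinearMap.add_apply, LinearMap.smul_apply, smul_eq_mul]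
  rw [hagree x y, key x,
    antis ω halt ((0:g), (1:k)) (y, (0:k)), antis ω' halt' ((0:g), (1:k)) (y, (0:k)),
    key y, halt ((0:g), (1:k)), halt' ((0:g), (1:k))]
end

section
/- Let 𝔨 be a finite-dimensional semisimple Lie algebra over a field of characteristic 0. Then the canonical map 𝔨 → ∏_{I ∈ Spec(𝔨)} 𝔨/I, where Spec(𝔨) is the (finite) set of maximal ideals of 𝔨, is an isomorphism of Lie algebras. -/
section Aux

variable {k L : Type*} [Field k] [CharZero k] [LieRing L] [LieAlgebra k L]
    [FiniteDimensional k L] [LieAlgebra.IsSemisimple k L]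

lemma stmt6_aux_coatom (I : LieIdeal k L) :
    (I ≠ ⊤ ∧ ∀ J : LieIdeal k L, I ≤ J → J = I ∨ J = ⊤) ↔ IsCoatom I := by
  constructor
  · rintro ⟨h1, h2⟩
    exact ⟨h1, fun J hJ => (h2 J hJ.le).resolve_left (fun h => (ne_of_gt hJ) h)⟩
  · rintro ⟨h1, h2⟩
    refine ⟨h1, fun J hJ => ?_⟩
    rcases eq_or_lt_of_le hJ with h | h
    · exact Or.inl h.symm
    · exact Or.inr (h2 J h)

lemma stmt6_aux_sInf_coatoms :
    sInf {I : LieIdeal k L | IsCoatom I} = ⊥ := by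
  set b := sInf {I : LieIdeal k L | IsCoatom I} with hb
  obtain ⟨T, hT, hTb⟩ := (LieAlgebra.IsSemisimple.booleanGenerators k L).atomistic b
    (by rw [LieAlgebra.IsSemisimple.sSup_atoms_eq_top]; exact le_top)
  have hTempty : T = ∅ := by
    by_contra h
    obtain ⟨a, ha⟩ := Set.nonempty_iff_ne_empty.mpr h
    have haAtom : IsAtom a := hT ha
    have hle : a ≤ b := hTb ▸ le_sSup ha
    have h2 : a ≤ aᶜ := hle.trans (sInf_le haAtom.compl)
    have h3 : a = ⊥ := le_bot_iff.mp (by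
      have := le_inf le_rfl h2
      rwa [inf_compl_eq_bot] at this)
    exact haAtom.1 h3
  rw [hTb, hTempty, sSup_empty]

lemma stmt6_aux_comax {I : LieIdeal k L} (hI : IsCoatom I) {S : Set (LieIdeal k L)}
    (hS : ∀ J ∈ S, IsCoatom J ∧ J ≠ I) :
    I ⊔ sInf S = ⊤ := by
  have hbAtom : IsAtom Iᶜ := hI.compl
  have hble : Iᶜ ≤ sInf S := by
    refine le_sInf fun J hJ => ?_
    obtain ⟨hJc, hJI⟩ := hS J hJ
    by_contra hnle
    have hlt : Iᶜ ⊓ J < Iᶜ := lt_of_le_of_ne inf_le_left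
      (fun h => hnle (h ▸ inf_le_right))
    have hdisj : Disjoint Iᶜ J := disjoint_iff.mpr (hbAtom.2 _ hlt)
    have h1 : Iᶜ ≤ Jᶜ := hdisj.le_compl_right
    rcases hJc.compl.le_iff.mp h1 with h | h
    · exact hbAtom.1 h
    · exact hJI (compl_injective h.symm)
  refine top_le_iff.mp ?_
  calc (⊤ : LieIdeal k L) = I ⊔ Iᶜ := (sup_compl_eq_top).symm
  _ ≤ I ⊔ sInf S := sup_le_sup_left hble _

end Aux

/-- For a finite-dimensional semisimple Lie algebra `𝔨` in characteristic 0,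
`Spec 𝔨` (the set of maximal ideals) is finite and the canonical map
`𝔨 → ∏_{I ∈ Spec 𝔨} 𝔨/I` is an isomorphism of Lie algebras. -/
theorem stmt6 {k L : Type*} [Field k] [CharZero k] [LieRing L] [LieAlgebra k L]
    [FiniteDimensional k L] [LieAlgebra.IsSemisimple k L]
    (Spec : Set (LieIdeal k L))
    (hSpec : Spec = {I : LieIdeal k L | I ≠ ⊤ ∧ ∀ J : LieIdeal k L, I ≤ J → J = I ∨ J = ⊤})
    (F : L → ∀ I : Spec, L ⧸ (I : LieIdeal k L))
    (hF : ∀ (x : L) (I : Spec), F x I = LieSubmodule.Quotient.mk (N := (I : LieIdeal k L)) x) :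
    Spec.Finite ∧ Function.Bijective F ∧
      (∀ (x y : L) (I : Spec), F ⁅x, y⁆ I = ⁅F x I, F y I⁆) ∧
      (∀ (c : k) (x : L), F (c • x) = c • F x) ∧
      (∀ x y : L, F (x + y) = F x + F y) := by
  have hco : ∀ I : LieIdeal k L, I ∈ Spec ↔ IsCoatom I := by
    intro I; rw [hSpec]; exact stmt6_aux_coatom I
  -- finiteness
  have hAfin : {I : LieIdeal k L | IsAtom I}.Finite :=
    WellFoundedGT.finite_of_sSupIndep LieAlgebra.IsSemisimple.sSupIndep_isAtom
  have hFin : Spec.Finite := by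
    have hsub : Spec ⊆ compl '' {I : LieIdeal k L | IsAtom I} := by
      intro I hI
      exact ⟨Iᶜ, ((hco I).mp hI).compl, compl_compl I⟩
    exact (hAfin.image compl).subset hsub
  -- membership in sInf helper
  have hmem_sInf : ∀ (S : Set (LieIdeal k L)) (x : L), (∀ J ∈ S, x ∈ J) → x ∈ sInf S := by
    intro S x hx
    have hset := LieSubmodule.coe_sInf (R := k) (L := L) (M := L) S
    show x ∈ (↑(sInf S) : Set L)
    rw [hset]
    exact Set.mem_iInter₂.mpr hx
  -- injectivity
  have hinj : Function.Injective F := by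
    intro x y hxy
    have hmem : ∀ J ∈ {I : LieIdeal k L | IsCoatom I}, x - y ∈ J := by
      intro I hI
      have hIS : I ∈ Spec := (hco I).mpr hI
      have h1 := congrFun hxy ⟨I, hIS⟩
      rw [hF, hF] at h1
      have hsub : LieSubmodule.Quotient.mk (N := I) (x - y) = 0 := by
        have : LieSubmodule.Quotient.mk (N := I) (x - y)
            = LieSubmodule.Quotient.mk (N := I) x - LieSubmodule.Quotient.mk (N := I) y := rfl
        rw [this, h1, sub_self]
      exact (LieSubmodule.Quotient.mk_eq_zero').mp hsub
    have h2 : x - y ∈ sInf {I : LieIdeal k L | IsCoatom I} := hmem_sInf _ _ hmem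
    rw [stmt6_aux_sInf_coatoms] at h2
    have h3 : x - y = 0 := by simpa using h2
    exact sub_eq_zero.mp h3
  -- surjectivity
  have hsurj : Function.Surjective F := by
    intro g
    haveI : Fintype Spec := hFin.fintype
    -- for each I, find yI with mk yI = g I and yI ∈ J for all other J ∈ Spec
    have key : ∀ I : Spec, ∃ y : L,
        LieSubmodule.Quotient.mk (N := (I : LieIdeal k L)) y = g I ∧
        ∀ J : Spec, J ≠ I → y ∈ (J : LieIdeal k L) := by
      intro I
      obtain ⟨x, hx⟩ := LieSubmodule.Quotient.surjective_mk' (I : LieIdeal k L) (g I)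
      have hcomax : (I : LieIdeal k L) ⊔ sInf (Spec \ {(I : LieIdeal k L)}) = ⊤ := by
        apply stmt6_aux_comax ((hco I).mp I.2)
        intro J hJ
        exact ⟨(hco J).mp hJ.1, hJ.2⟩
      have hxtop : x ∈ ((I : LieIdeal k L) ⊔ sInf (Spec \ {(I : LieIdeal k L)})) := by
        rw [hcomax]; trivial
      obtain ⟨u, hu, v, hv, huv⟩ := (LieSubmodule.mem_sup _ _ x).mp hxtop
      refine ⟨v, ?_, ?_⟩
      · have : LieSubmodule.Quotient.mk (N := (I : LieIdeal k L)) x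
            = LieSubmodule.Quotient.mk (N := (I : LieIdeal k L)) v := by
          rw [← huv]
          have : LieSubmodule.Quotient.mk (N := (I : LieIdeal k L)) (u + v)
              = LieSubmodule.Quotient.mk (N := (I : LieIdeal k L)) u
              + LieSubmodule.Quotient.mk (N := (I : LieIdeal k L)) v := rfl
          rw [this, LieSubmodule.Quotient.mk_eq_zero'.mpr hu, zero_add]
        rw [← this]
        exact hx
      · intro J hJ
        have hJmem : (J : LieIdeal k L) ∈ Spec \ {(I : LieIdeal k L)} := by
          refine ⟨J.2, ?_⟩
          intro hc
          exact hJ (Subtype.ext hc)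
        exact sInf_le hJmem hv
    choose y hy1 hy2 using key
    refine ⟨∑ I : Spec, y I, ?_⟩
    funext I
    rw [hF]
    have hsum : LieSubmodule.Quotient.mk (N := (I : LieIdeal k L)) (∑ J : Spec, y J)
        = ∑ J : Spec, LieSubmodule.Quotient.mk (N := (I : LieIdeal k L)) (y J) :=
      map_sum (LieSubmodule.Quotient.mk' (I : LieIdeal k L)).toLinearMap _ _
    rw [hsum]
    rw [Finset.sum_eq_single I]
    · exact hy1 I
    · intro J _ hJI
      exact LieSubmodule.Quotient.mk_eq_zero'.mpr (hy2 J I hJI.symm)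
    · intro h
      exact absurd (Finset.mem_univ I) h
  refine ⟨hFin, ⟨hinj, hsurj⟩, ?_, ?_, ?_⟩
  · intro x y I
    rw [hF, hF, hF]
    exact LieSubmodule.Quotient.mk_bracket (R := k) (I := (I : LieIdeal k L)) x y
  · intro c x
    funext I
    rw [hF]
    show _ = c • F x I
    rw [hF]
    rfl
  · intro x y
    funext I
    rw [hF]
    show _ = F x I + F y I
    rw [hF, hF]
    rfl
end

section
/- Let 𝔤 be a Lie algebra over a field k, D a derivation of 𝔤, ψ : 𝔤 × 𝔤 → k a 2-cocycle on 𝔤, and f : 𝔤 → k a linear map satisfying f([ξ,η]) = ψ(D ξ, η) + ψ(ξ, D η) for all ξ, η ∈ 𝔤. Then the alternating bilinear extension ω of ψ to 𝔤 ⋊_D k determined by ω((ξ,0),(η,0)) = ψ(ξ,η) and ω((0,1),(ξ,0)) = f(ξ) is a 2-cocycle on 𝔤 ⋊_D k. -/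
/-- Given a 2-cocycle `ψ` on `𝔤` and a linear `f` with
`f([ξ,η]) = ψ(Dξ,η) + ψ(ξ,Dη)`, the extension
`ω((ξ,s),(η,t)) = ψ(ξ,η) + s·f(η) − t·f(ξ)` is a 2-cocycle on `𝔤 ⋊_D k`. -/
theorem stmt13 {k g : Type*} [Field k] [LieRing g] [LieAlgebra k g]
    (D : g →ₗ[k] g) (hD : ∀ x y : g, D ⁅x, y⁆ = ⁅D x, y⁆ + ⁅x, D y⁆)
    (ψ : g →ₗ[k] g →ₗ[k] k)
    (hψalt : ∀ x : g, ψ x x = 0)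
    (hψcoc : ∀ x y z : g, ψ ⁅x, y⁆ z + ψ ⁅y, z⁆ x + ψ ⁅z, x⁆ y = 0)
    (f : g →ₗ[k] k)
    (hf : ∀ ξ η : g, f ⁅ξ, η⁆ = ψ (D ξ) η + ψ ξ (D η))
    (br : g × k → g × k → g × k)
    (hbr : ∀ u v : g × k, br u v = (⁅u.1, v.1⁆ + u.2 • D v.1 - v.2 • D u.1, 0))
    (ω : g × k → g × k → k)
    (hω : ∀ u v : g × k, ω u v = ψ u.1 v.1 + u.2 * f v.1 - v.2 * f u.1) :
    (∀ u : g × k, ω u u = 0) ∧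
    (∀ u v w : g × k, ω (br u v) w + ω (br v w) u + ω (br w u) v = 0) := by
  have hskew : ∀ x y : g, ψ x y + ψ y x = 0 := by
    intro x y
    have h := hψalt (x + y)
    simpa [map_add, hψalt, add_comm] using h
  constructor
  · intro u
    simp [hω, hψalt]
  · intro u v w
    simp only [hω, hbr, map_add, map_sub, map_smul, LinearMap.add_apply,
      LinearMap.sub_apply, LinearMap.smul_apply, smul_eq_mul, hf]
    linear_combination hψcoc u.1 v.1 w.1 - u.2 * hskew (D w.1) v.1
      - v.2 * hskew (D u.1) w.1 - w.2 * hskew (D v.1) u.1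
end

section
/- Let 𝔤 be a Lie algebra over a field k with a derivation D, and let ω be a 2-cocycle on 𝔥 = 𝔤 ⋊_D k whose restriction to 𝔤 × 𝔤 vanishes. If 𝔤 is perfect, then ω = 0. -/
/-- A 2-cocycle on `𝔤 ⋊_D k` vanishing on `𝔤 × 𝔤` vanishes if `𝔤` is perfect. -/
theorem stmt14 {k g : Type*} [Field k] [LieRing g] [LieAlgebra k g]
    (D : g →ₗ[k] g) (hD : ∀ x y : g, D ⁅x, y⁆ = ⁅D x, y⁆ + ⁅x, D y⁆)
    (hperf : ∀ x : g, x ∈ Submodule.span k {z : g | ∃ a b : g, z = ⁅a, b⁆})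
    (br : g × k → g × k → g × k)
    (hbr : ∀ u v : g × k, br u v = (⁅u.1, v.1⁆ + u.2 • D v.1 - v.2 • D u.1, 0))
    (ω : g × k →ₗ[k] g × k →ₗ[k] k)
    (halt : ∀ u : g × k, ω u u = 0)
    (hcoc : ∀ u v w : g × k, ω (br u v) w + ω (br v w) u + ω (br w u) v = 0)
    (hres : ∀ ξ η : g, ω (ξ, 0) (η, 0) = 0) :
    ω = 0 := by
  set e : g × k := ((0 : g), (1 : k)) with he
  -- skew symmetry
  have hskew : ∀ u v : g × k, ω u v = - ω v u := by
    intro u v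
    have h := halt (u + v)
    simp only [map_add, LinearMap.add_apply, halt] at h
    linear_combination h
  -- ω (x,0) e = 0 for all x
  have hxe : ∀ x : g, ω (x, (0:k)) e = 0 := by
    intro x
    have hmem := hperf x
    set F : g →ₗ[k] k := (ω.flip e).comp (LinearMap.inl k g k) with hF
    have hgen : ∀ z ∈ {z : g | ∃ a b : g, z = ⁅a, b⁆}, F z = 0 := by
      rintro z ⟨a, b, rfl⟩
      have h := hcoc ((a : g), (0:k)) ((b : g), (0:k)) e
      rw [hbr, hbr, hbr] at h
      simp only [he] at h
      simp only [zero_smul, one_smul, lie_zero, zero_lie, smul_zero, zero_add, add_zero,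
        sub_zero, zero_sub] at h
      have h1 : ω ((-D b : g), (0:k)) ((a : g), (0:k)) = 0 := hres _ _
      have h2 : ω ((D a : g), (0:k)) ((b : g), (0:k)) = 0 := hres _ _
      simp only [h1, h2, add_zero] at h
      simpa [hF, LinearMap.flip_apply, he] using h
    have : Submodule.span k {z : g | ∃ a b : g, z = ⁅a, b⁆} ≤ LinearMap.ker F := by
      rw [Submodule.span_le]
      intro z hz
      exact LinearMap.mem_ker.mpr (hgen z hz)
    have hFx : F x = 0 := this hmem
    simpa [hF, LinearMap.flip_apply, he] using hFx
  have hee : ω e e = 0 := halt e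
  have hex : ∀ x : g, ω e (x, (0:k)) = 0 := by
    intro x
    rw [hskew, hxe, neg_zero]
  have hall : ∀ u v : g × k, ω u v = 0 := by
    intro u v
    have hu : u = ((u.1, (0:k)) : g × k) + u.2 • e := by
      simp [he, Prod.ext_iff]
    have hv : v = ((v.1, (0:k)) : g × k) + v.2 • e := by
      simp [he, Prod.ext_iff]
    rw [hu, hv]
    simp only [map_add, map_smul, LinearMap.add_apply, LinearMap.smul_apply]
    rw [hres, hxe, hex, hee]
    simp
  apply LinearMap.ext
  intro u
  apply LinearMap.ext
  intro v
  simp [hall]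
end
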